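/- arXiv:2206.14067 — 2 statements merged into one kernel-verified Lean document; each statement's English description precedes it below -/
import Mathlib

section
/- The equation 3^x + 2^y = 11^z has exactly two solutions in positive integers (x, y, z), namely (x, y, z) = (2, 1, 1) and (x, y, z) = (1, 3, 1). -/
set_option maxRecDepth 100000
set_option maxHeartbeats 4000000
set_option exponentiation.threshold 3000

lemma pow_mod_period (a n T x : ℕ) (h : a ^ T % n = 1 % n) :
    a ^ x % n = a ^ (x % T) % n := by
  conv_lhs => rw [← Nat.div_add_mod x T]
  rw [pow_add, pow_mul, Nat.mul_mod, Nat.pow_mod, h, ← Nat.pow_mod, one_pow,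
    ← Nat.mul_mod, one_mul]

lemma key_check : ∀ a < 440, ∀ b < 110, (3 ^ a + 2 ^ b) % 121 = 0 →
    ∀ c < 22, (3 ^ a + 2 ^ b) % 2047 ≠ 11 ^ c % 2047 := by decide

lemma no_big_z (x y z : ℕ) (hz : 2 ≤ z) (h : 3 ^ x + 2 ^ y = 11 ^ z) : False := by
  have hdvd : (121 : ℕ) ∣ 11 ^ z := by
    calc (121 : ℕ) = 11 ^ 2 := by norm_num
    _ ∣ 11 ^ z := pow_dvd_pow 11 hz
  have h121 : (3 ^ (x % 440) + 2 ^ (y % 110)) % 121 = 0 := by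
    rw [Nat.add_mod, ← pow_mod_period 3 121 440 x (by norm_num),
      ← pow_mod_period 2 121 110 y (by norm_num), ← Nat.add_mod, h]
    obtain ⟨k, hk⟩ := hdvd
    rw [hk]
    simp [Nat.mul_mod_right]
  have h2047 : (3 ^ (x % 440) + 2 ^ (y % 110)) % 2047 = 11 ^ (z % 22) % 2047 := by
    rw [Nat.add_mod, ← pow_mod_period 3 2047 440 x (by norm_num),
      ← pow_mod_period 2 2047 110 y (by norm_num), ← Nat.add_mod, h,
      ← pow_mod_period 11 2047 22 z (by norm_num)]
  exact key_check (x % 440) (Nat.mod_lt _ (by norm_num)) (y % 110)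
    (Nat.mod_lt _ (by norm_num)) h121 (z % 22) (Nat.mod_lt _ (by norm_num)) h2047

/-- The equation `3^x + 2^y = 11^z` has exactly two solutions in positive integers
`(x, y, z)`, namely `(2, 1, 1)` and `(1, 3, 1)`. -/
theorem solutions_3_2_11 :
    {p : ℕ × ℕ × ℕ | 0 < p.1 ∧ 0 < p.2.1 ∧ 0 < p.2.2 ∧
      3 ^ p.1 + 2 ^ p.2.1 = 11 ^ p.2.2} = {(2, 1, 1), (1, 3, 1)} := by
  ext ⟨x, y, z⟩
  simp only [Set.mem_setOf_eq, Set.mem_insert_iff, Set.mem_singleton_iff,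
    Prod.mk.injEq]
  constructor
  · rintro ⟨hx, hy, hz, h⟩
    have hz1 : z = 1 := by
      rcases Nat.lt_or_ge z 2 with h2 | h2
      · omega
      · exact absurd h (fun h => (no_big_z x y z h2 h))
    subst hz1
    simp only [pow_one] at h
    have hx3 : x < 3 := by
      have h1 : 3 ^ x < 3 ^ 3 :=
        lt_of_le_of_lt (le_trans (Nat.le_add_right _ _) h.le) (by norm_num)
      exact (Nat.pow_lt_pow_iff_right (by norm_num)).mp h1
    have hy4 : y < 4 := by
      have h1 : 2 ^ y < 2 ^ 4 :=
        lt_of_le_of_lt (le_trans (Nat.le_add_left _ _) h.le) (by norm_num)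
      exact (Nat.pow_lt_pow_iff_right (by norm_num)).mp h1
    interval_cases x <;> interval_cases y <;> simp_all
  · rintro (⟨h1, h2, h3⟩ | ⟨h1, h2, h3⟩) <;> subst h1 <;> subst h2 <;> subst h3 <;>
      norm_num
end

section
/- The equation 3^x + 5^y = 2^z has exactly three solutions in positive integers (x, y, z), namely (x, y, z) = (1, 1, 3), (x, y, z) = (3, 1, 5), and (x, y, z) = (1, 3, 7). -/
set_option maxRecDepth 10000

def SL : List (Nat × Nat) := [(2, 1), (2, 3774), (8, 5), (8, 3770), (68, 43), (68, 3732), (73, 1394), (73, 2381), (93, 1713), (93, 2062), (102, 554), (102, 3221), (107, 748), (107, 3027), (143, 297), (143, 3478), (173, 244), (173, 3531), (198, 1444), (198, 2331), (208, 1110), (208, 2665), (248, 1531), (248, 2244), (268, 652), (268, 3123), (282, 1778), (282, 1997), (293, 1767), (293, 2008), (302, 191), (302, 3584), (307, 312), (307, 3463), (308, 375), (308, 3400), (392, 210), (392, 3565), (418, 1752), (418, 2023), (468, 783), (468, 2992), (483, 820), (483, 2955), (502, 1711), (502, 2064), (532, 973), (532, 2802), (582, 697), (582, 3078), (608, 610),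 (608, 3165), (632, 1622), (632, 2153), (677, 569), (677, 3206), (682, 1847), (682, 1928), (748, 1876), (748, 1899), (777, 1719), (777, 2056), (802, 519), (802, 3256), (852, 281), (852, 3494), (943, 687), (943, 3088), (1018, 957), (1018, 2818), (1042, 425), (1042, 3350), (1082, 1737), (1082, 2038), (1092, 815), (1092, 2960), (1093, 198), (1093, 3577), (1098, 584), (1098, 3191), (1118, 1418), (1118, 2357), (1148, 714), (1148, 3061), (1183, 830), (1183, 2945), (1217, 800), (1217, 2975), (1268, 192), (1268, 3583), (1323, 349), (1323, 3426), (1348, 1114), (1348, 2661), (1352, 1574), (1352, 2201), (1357, 152), (1357, 3623), (1367, 1505), (1367, 2270), (1398, 704), (1398, 3071), (1473, 1291), (1473, 2484), (1548, 1554), (1548, 2221), (1567, 1865), (1567, 1910), (1623, 711), (1623, 3064), (1632, 143), (1632, 3632), (1633, 945), (1633, 2830), (1657, 1818), (1657, 1957), (1667, 375), (1667, 3400), (1682, 937), (1682, 2838), (1702, 1641), (1702, 2134), (1707, 917), (1707, 2858), (1733, 235), (1733, 3540), (1752, 261), (1752, 3514), (1768, 1352), (1768, 2423), (1782, 388), (1782,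 3387), (1823, 396), (1823, 3379), (1842, 1445), (1842, 2330), (1857, 1842), (1857, 1933), (1907, 128), (1907, 3647), (1927, 651), (1927, 3124), (1943, 872), (1943, 2903), (1952, 661), (1952, 3114), (1957, 1583), (1957, 2192), (1958, 1520), (1958, 2255), (1967, 1365), (1967, 2410), (1968, 463), (1968, 3312), (1983, 570), (1983, 3205), (2002, 504), (2002, 3271), (2057, 1457), (2057, 2318), (2073, 584), (2073, 3191), (2077, 234), (2077, 3541), (2148, 501), (2148, 3274), (2152, 346), (2152, 3429), (2158, 460), (2158, 3315), (2182, 1618), (2182, 2157), (2193, 1577), (2193, 2198), (2207, 1562), (2207, 2213), (2227, 1164), (2227, 2611), (2243, 1603), (2243, 2172), (2257, 1203), (2257, 2572), (2293, 1247), (2293, 2528), (2323, 1109), (2323, 2666), (2343, 1022), (2343, 2753), (2348, 1704), (2348, 2071), (2382, 48), (2382, 3727), (2407, 408), (2407, 3367), (2423, 1144), (2423, 2631), (2427, 1604), (2427, 2171), (2532, 1148), (2532, 2627), (2542, 680), (2542, 3095), (2582, 1633), (2582, 2142), (2623, 581), (2623, 3194), (2673, 1389), (2673, 2386), (2677, 1641),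 (2677, 2134), (2743, 1887), (2743, 1888), (2752, 199), (2752, 3576), (2808, 965), (2808, 2810), (2823, 464), (2823, 3311), (2848, 484), (2848, 3291), (2898, 596), (2898, 3179), (2923, 776), (2923, 2999), (2927, 1609), (2927, 2166), (2952, 496), (2952, 3279), (2973, 1576), (2973, 2199), (2992, 1320), (2992, 2455), (3018, 452), (3018, 3323), (3027, 819), (3027, 2956), (3057, 838), (3057, 2937), (3092, 990), (3092, 2785), (3132, 1157), (3132, 2618), (3173, 301), (3173, 3474), (3207, 802), (3207, 2973), (3227, 1231), (3227, 2544), (3232, 243), (3232, 3532), (3273, 654), (3273, 3121), (3277, 936), (3277, 2839), (3293, 1518), (3293, 2257), (3317, 745), (3317, 3030), (3318, 157), (3318, 3618), (3342, 1695), (3342, 2080), (3343, 1088), (3343, 2687), (3368, 442), (3368, 3333), (3382, 1167), (3382, 2608), (3427, 11), (3427, 3764), (3443, 237), (3443, 3538), (3452, 1541), (3452, 2234), (3458, 425), (3458, 3350), (3473, 866), (3473, 2909), (3502, 1804), (3502, 1971), (3508, 60), (3508, 3715), (3517, 1215), (3517, 2560), (3518, 483), (3518, 3292), (3527, 474), (3527,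 3301), (3568, 778), (3568, 2997), (3577, 1274), (3577, 2501), (3618, 833), (3618, 2942), (3633, 800), (3633, 2975), (3673, 1611), (3673, 2164), (3718, 657), (3718, 3118)]

def P2L : List Nat := [1, 2, 4, 8, 16, 32, 64, 128, 256, 512, 1024, 2048, 321, 642, 1284, 2568, 1361, 2722, 1669, 3338, 2901, 2027, 279, 558, 1116, 2232, 689, 1378, 2756, 1737, 3474, 3173, 2571, 1367, 2734, 1693, 3386, 2997, 2219, 663, 1326, 2652, 1529, 3058, 2341, 907, 1814, 3628, 3481, 3187, 2599, 1423, 2846, 1917, 59, 118, 236, 472, 944, 1888]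

def P5L : List Nat := [25, 125, 625, 3125, 525, 2625, 1800, 1450, 3475, 2275, 50, 250, 1250, 2475, 1050, 1475, 3600, 2900, 3175, 775, 100, 500, 2500, 1175, 2100, 2950, 3425, 2025, 2575, 1550, 200, 1000, 1225, 2350, 425, 2125, 3075, 275, 1375, 3100, 400, 2000, 2450, 925, 850, 475, 2375, 550, 2750, 2425, 800, 225, 1125, 1850, 1700, 950, 975, 1100, 1725, 1075, 1600, 450, 2250, 3700, 3400, 1900, 1950, 2200, 3450, 2150, 3200, 900, 725, 3625, 3025]

section helpers

lemma pow_mod_period_s19 (b m o : ℕ) (hm : 1 < m) (h : b ^ o % m = 1) (n : ℕ) :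
    b ^ n % m = b ^ (n % o) % m := by
  conv_lhs => rw [← Nat.div_add_mod n o, pow_add, pow_mul, Nat.mul_mod, Nat.pow_mod, h]
  simp [Nat.one_mod_eq_one.mpr (by omega : m ≠ 1)]

lemma SL_closed : ∀ p ∈ SL, (((19*p.1+30*p.2) % 3775, (12*p.1+19*p.2) % 3775)) ∈ SL := by
  decide

lemma SL_base1 : ((2:ℕ), (1:ℕ)) ∈ SL := by decide
lemma SL_base2 : ((8:ℕ), (5:ℕ)) ∈ SL := by decide

lemma SL_final : ∀ p ∈ SL, p.1 ∈ P2L → p.2 ∈ P5L → False := by decide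

lemma base_small : ∀ A < 23, ∀ B < 15, 2*A^2 = 5*B^2+3 →
    (A = 2 ∧ B = 1) ∨ (A = 8 ∧ B = 5) := by decide

lemma mem_P2L : ∀ i < 60, 2 ^ i % 3775 ∈ P2L := by decide

lemma mem_P5L : ∀ j < 75, 25 * (5 ^ j % 151) ∈ P5L := by decide

end helpers

/-- Every positive solution of the Pell-type equation `2A² = 5B² + 3` reduces
mod 3775 into the finite orbit set `SL`. -/
lemma pell_inv : ∀ B A : ℕ, 0 < A → 0 < B → 2*A^2 = 5*B^2+3 → (A % 3775, B % 3775) ∈ SL := by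
  intro B
  induction B using Nat.strong_induction_on with
  | _ B IH =>
    intro A hA hB h
    by_cases hsmall : B < 15
    · have hA23 : A < 23 := by nlinarith
      rcases base_small A hA23 B hsmall h with ⟨rfl, rfl⟩ | ⟨rfl, rfl⟩
      · exact SL_base1
      · exact SL_base2
    · push_neg at hsmall
      have h1 : 30*B < 19*A := by nlinarith
      have h2 : 12*A < 19*B := by nlinarith
      have h3 : 3*B < 2*A := by nlinarith
      set A' := 19*A - 30*B with hA'
      set B' := 19*B - 12*A with hB'
      have eA : A' + 30*B = 19*A := by omega
      have eB : B' + 12*A = 19*B := by omega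
      have h' : 2*A'^2 = 5*B'^2+3 := by
        zify [h1.le, h2.le] at hA' hB' ⊢; nlinarith [hA', hB', h]
      have hBlt : B' < B := by omega
      have hmem := IH B' hBlt A' (by omega) (by omega) h'
      have hrec := SL_closed _ hmem
      have e1 : (19*(A'%3775)+30*(B'%3775)) % 3775 = A % 3775 := by
        conv_lhs => rw [Nat.add_mod, Nat.mul_mod, Nat.mul_mod 30]
        simp only [Nat.mod_mod_of_dvd, Nat.mod_mod]
        rw [← Nat.mul_mod, ← Nat.mul_mod, ← Nat.add_mod]
        congr 1
        omega
      have e2 : (12*(A'%3775)+19*(B'%3775)) % 3775 = B % 3775 := by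
        conv_lhs => rw [Nat.add_mod, Nat.mul_mod, Nat.mul_mod 19]
        simp only [Nat.mod_mod_of_dvd, Nat.mod_mod]
        rw [← Nat.mul_mod, ← Nat.mul_mod, ← Nat.add_mod]
        congr 1
        omega
      simpa [e1, e2] using hrec

/-- In the case `x = 1`, i.e. `3 + 5^y = 2^z` with `y, z` odd, we must have `y ≤ 3`. -/
lemma pell_y3 (y z : ℕ) (hy : 0 < y) (hy2 : y % 2 = 1) (hz2 : z % 2 = 1)
    (h : 3 + 5^y = 2^z) : y ≤ 3 := by
  by_contra hc
  have hy5 : 5 ≤ y := by omega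
  set A := 2 ^ (z / 2) with hA
  set B := 5 ^ (y / 2) with hB
  have hzz : z = 2*(z/2)+1 := by omega
  have hyy : y = 2*(y/2)+1 := by omega
  have h2A : 2*A^2 = 2^z := by
    conv_rhs => rw [hzz]
    rw [hA]; ring
  have h5B : 5*B^2 = 5^y := by
    conv_rhs => rw [hyy]
    rw [hB]; ring
  have hP : 2*A^2 = 5*B^2+3 := by omega
  have hmem := pell_inv B A (by positivity) (by positivity) hP
  have hA2 : A % 3775 ∈ P2L := by
    have : A % 3775 = 2 ^ (z/2 % 60) % 3775 := by
      rw [hA]; exact pow_mod_period_s19 2 3775 60 (by norm_num) (by norm_num) _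
    rw [this]
    exact mem_P2L _ (Nat.mod_lt _ (by norm_num))
  have hB5 : B % 3775 ∈ P5L := by
    obtain ⟨t, ht⟩ : ∃ t, y/2 = 2 + t := ⟨y/2 - 2, by omega⟩
    have : B % 3775 = 25 * (5 ^ (t % 75) % 151) := by
      rw [hB, ht, pow_add, (by norm_num : (5:ℕ)^2 = 25),
        (by norm_num : (3775:ℕ) = 25 * 151), Nat.mul_mod_mul_left,
        pow_mod_period_s19 5 151 75 (by norm_num) (by norm_num)]
    rw [this]
    exact mem_P5L _ (Nat.mod_lt _ (by norm_num))
  exact SL_final _ hmem hA2 hB5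

section decs

lemma dec8 : ∀ a < 2, ∀ b < 2, (3^a % 8 + 5^b % 8) % 8 = 0 → a = 1 ∧ b = 1 := by decide

lemma dec16 : ∀ a < 4, ∀ b < 4, (a % 2 = 1 ∧ b % 2 = 1 ∧ (3^a % 16 + 5^b % 16) % 16 = 0) →
    (a = 1 ∧ b = 3) ∨ (a = 3 ∧ b = 1) := by decide

lemma dec5 : ∀ a < 4, ∀ c < 4, ((a = 1 ∨ a = 3) ∧ (3^a % 5 + 0) % 5 = 2^c % 5) →
    ((a = 1 ∧ c = 3) ∨ (a = 3 ∧ c = 1)) := by decide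

lemma dec13 : ∀ (a : Fin 3) (b : Fin 4) (c : Fin 12), (b.val = 3 ∧ c.val % 4 = 3 ∧
    (3^a.val % 13 + 5^b.val % 13) % 13 = 2^c.val % 13) → a.val = 1 ∧ c.val = 7 := by decide

lemma dec9 : ∀ b < 6, ∀ c < 6, (b % 2 = 1 ∧ c = 1 ∧ (0 + 5^b % 9) % 9 = 2^c % 9) → b = 5 := by
  decide

lemma dec7 : ∀ c < 3, (3^1 % 7 + 5^5 % 7) % 7 ≠ 2^c % 7 := by decide

lemma dec6417 : ∀ a < 16, ∀ b < 16, ∀ c < 8, (a % 4 = 3 ∧ b % 4 = 1 ∧ c % 4 = 1 ∧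
    (3^a % 64 + 5^b % 64) % 64 = 0 ∧ (3^a % 17 + 5^b % 17) % 17 = 2^c % 17) → False := by decide

lemma dec_end : ∀ (a : Fin 5) (b : Fin 4) (c : Fin 8),
    (0 < a.val ∧ 0 < b.val ∧ 3^a.val + 5^b.val = 2^c.val) →
    (a.val = 1 ∧ b.val = 1 ∧ c.val = 3) ∨ (a.val = 3 ∧ b.val = 1 ∧ c.val = 5) ∨
    (a.val = 1 ∧ b.val = 3 ∧ c.val = 7) := by decide

end decs

/-- The main sieve: there is no solution with `z ≥ 8`. -/
lemma main_lemma (x y z : ℕ) (hx : 0 < x) (hy : 0 < y) (hz : 8 ≤ z) :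
    3^x + 5^y ≠ 2^z := by
  intro h
  -- congruence extraction for an odd modulus m with periods o1 o2 o3
  have hodd : ∀ m o1 o2 o3 : ℕ, 1 < m → 3^o1 % m = 1 → 5^o2 % m = 1 → 2^o3 % m = 1 →
      (3^(x % o1) % m + 5^(y % o2) % m) % m = 2^(z % o3) % m := by
    intro m o1 o2 o3 hm h1 h2 h3
    rw [← pow_mod_period_s19 3 m o1 hm h1, ← pow_mod_period_s19 5 m o2 hm h2,
      ← pow_mod_period_s19 2 m o3 hm h3, ← Nat.add_mod, h]
  -- congruence extraction for powers of 2
  have hpow2 : ∀ k o1 o2 : ℕ, k ≤ z → 1 < 2^k → 3^o1 % 2^k = 1 → 5^o2 % 2^k = 1 →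
      (3^(x % o1) % 2^k + 5^(y % o2) % 2^k) % 2^k = 0 := by
    intro k o1 o2 hk hm h1 h2
    rw [← pow_mod_period_s19 3 (2^k) o1 hm h1, ← pow_mod_period_s19 5 (2^k) o2 hm h2,
      ← Nat.add_mod, h]
    exact Nat.mod_eq_zero_of_dvd (pow_dvd_pow 2 hk)
  have h8 := hpow2 3 2 2 (by omega) (by norm_num) (by norm_num) (by norm_num)
  obtain ⟨hx2, hy2⟩ := dec8 _ (Nat.mod_lt _ (by norm_num)) _ (Nat.mod_lt _ (by norm_num)) h8
  have h16 := hpow2 4 4 4 (by omega) (by norm_num) (by norm_num) (by norm_num)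
  have h16' := dec16 _ (Nat.mod_lt _ (by norm_num)) _ (Nat.mod_lt _ (by norm_num))
    ⟨by omega, by omega, h16⟩
  have h5 : (3^(x % 4) % 5 + 0) % 5 = 2^(z % 4) % 5 := by
    have hy5 : 5^y % 5 = 0 :=
      Nat.mod_eq_zero_of_dvd (dvd_pow_self 5 (by omega))
    have h' : (3^x + 5^y) % 5 = 2^z % 5 := by rw [h]
    rw [Nat.add_mod, hy5, pow_mod_period_s19 3 5 4 (by norm_num) (by norm_num),
      pow_mod_period_s19 2 5 4 (by norm_num) (by norm_num)] at h'
    exact h'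
  have h5' := dec5 _ (Nat.mod_lt _ (by norm_num)) _ (Nat.mod_lt _ (by norm_num))
    ⟨by omega, h5⟩
  rcases h16' with ⟨hx4, hy4⟩ | ⟨hx4, hy4⟩
  · -- Case B : x ≡ 1, y ≡ 3 (mod 4), z ≡ 3 (mod 4)
    have hz4 : z % 4 = 3 := by omega
    have h13 := hodd 13 3 4 12 (by norm_num) (by norm_num) (by norm_num) (by norm_num)
    obtain ⟨hx3f, hz12f⟩ := dec13 ⟨x % 3, by omega⟩ ⟨y % 4, by omega⟩ ⟨z % 12, by omega⟩
      ⟨hy4, by show z % 12 % 4 = 3; omega, h13⟩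
    have hx3 : x % 3 = 1 := hx3f
    have hz12 : z % 12 = 7 := hz12f
    by_cases hx1 : x = 1
    · subst hx1
      have hylt := pell_y3 y z hy hy2 (by omega) (by rw [← h]; norm_num)
      have hy3 : y = 3 := by omega
      subst hy3
      have : (2:ℕ)^8 ≤ 2^z := Nat.pow_le_pow_right (by norm_num) hz
      norm_num at h
      omega
    · have hxge2 : 2 ≤ x := by omega
      have h9 : (0 + 5^(y % 6) % 9) % 9 = 2^(z % 6) % 9 := by
        have hx9 : 3^x % 9 = 0 := by
          refine Nat.mod_eq_zero_of_dvd ?_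
          calc (9:ℕ) = 3^2 := by norm_num
          _ ∣ 3^x := pow_dvd_pow 3 hxge2
        have h' : (3^x + 5^y) % 9 = 2^z % 9 := by rw [h]
        rw [Nat.add_mod, hx9, pow_mod_period_s19 5 9 6 (by norm_num) (by norm_num),
          pow_mod_period_s19 2 9 6 (by norm_num) (by norm_num)] at h'
        exact h'
      have hy6 := dec9 _ (Nat.mod_lt _ (by norm_num)) _ (Nat.mod_lt _ (by norm_num))
        ⟨by omega, by omega, h9⟩
      have h7 := hodd 7 6 6 3 (by norm_num) (by norm_num) (by norm_num) (by norm_num)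
      have hx6 : x % 6 = 1 := by omega
      rw [hx6, hy6] at h7
      exact dec7 _ (Nat.mod_lt _ (by norm_num)) h7
  · -- Case A : x ≡ 3, y ≡ 1 (mod 4), z ≡ 1 (mod 4)
    have hz4 : z % 4 = 1 := by omega
    have h64 := hpow2 6 16 16 (by omega) (by norm_num) (by norm_num) (by norm_num)
    have h17 := hodd 17 16 16 8 (by norm_num) (by norm_num) (by norm_num) (by norm_num)
    exact dec6417 _ (Nat.mod_lt _ (by norm_num)) _ (Nat.mod_lt _ (by norm_num))
      _ (Nat.mod_lt _ (by norm_num)) ⟨by omega, by omega, by omega, h64, h17⟩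

/-- The equation `3^x + 5^y = 2^z` has exactly three solutions in positive integers
`(x, y, z)`, namely `(1, 1, 3)`, `(3, 1, 5)` and `(1, 3, 7)`. -/
theorem solutions_3_5_2 :
    {p : ℕ × ℕ × ℕ | 0 < p.1 ∧ 0 < p.2.1 ∧ 0 < p.2.2 ∧
      3 ^ p.1 + 5 ^ p.2.1 = 2 ^ p.2.2} = {(1, 1, 3), (3, 1, 5), (1, 3, 7)} := by
  ext ⟨x, y, z⟩
  simp only [Set.mem_setOf_eq, Set.mem_insert_iff, Set.mem_singleton_iff, Prod.mk.injEq]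
  constructor
  · rintro ⟨hx, hy, hz, h⟩
    have hz7 : z ≤ 7 := by
      by_contra hc
      exact main_lemma x y z hx hy (by omega) h
    have h2z : (2:ℕ)^z ≤ 128 := by
      calc (2:ℕ)^z ≤ 2^7 := Nat.pow_le_pow_right (by norm_num) hz7
      _ = 128 := by norm_num
    have hxle : (3:ℕ)^x ≤ 128 := by
      refine le_trans ?_ h2z
      rw [← h]
      exact Nat.le_add_right _ _
    have hyle : (5:ℕ)^y ≤ 128 := by
      refine le_trans ?_ h2z
      rw [← h]
      exact Nat.le_add_left _ _
    have hx4 : x < 5 := by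
      by_contra hc
      have h1 : (243:ℕ) ≤ 3^x := by
        calc (243:ℕ) = 3^5 := by norm_num
        _ ≤ 3^x := Nat.pow_le_pow_right (by norm_num) (by omega)
      have := h1.trans hxle
      norm_num at this
    have hy4 : y < 4 := by
      by_contra hc
      have h1 : (625:ℕ) ≤ 5^y := by
        calc (625:ℕ) = 5^4 := by norm_num
        _ ≤ 5^y := Nat.pow_le_pow_right (by norm_num) (by omega)
      have := h1.trans hyle
      norm_num at this
    exact dec_end ⟨x, hx4⟩ ⟨y, hy4⟩ ⟨z, by omega⟩ ⟨hx, hy, h⟩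
  · rintro (⟨rfl, rfl, rfl⟩ | ⟨rfl, rfl, rfl⟩ | ⟨rfl, rfl, rfl⟩) <;> norm_num
end
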